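/- Let x' = 1^k · x · 0^k. If x' contains a substring of balance −(k+1) starting at position i < k (i.e., beginning inside the leading 1^k block), then some prefix of x has negative balance. -/
import Mathlib


/-- Balance of a binary word: number of 0s (false) minus number of 1s (true). -/
def bal (s : List Bool) : ℤ := (s.count false : ℤ) - (s.count true : ℤ)

/-- The substring x[i..j] (inclusive, 0-indexed). -/
def sub (x : List Bool) (i j : ℕ) : List Bool := (x.drop i).take (j + 1 - i)

/-- x is a Dyck word of depth at most k: every prefix has balance in [0,k] and total balance 0. -/
def DyckBounded (x : List Bool) (k : ℕ) : Prop :=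
  (∀ p, p <+: x → 0 ≤ bal p ∧ bal p ≤ (k : ℤ)) ∧ bal x = 0

lemma bal_append (a b : List Bool) : bal (a ++ b) = bal a + bal b := by
  simp [bal, List.count_append]; ring

lemma bal_rep_true (m : ℕ) : bal (List.replicate m true) = -(m : ℤ) := by
  simp [bal, List.count_replicate]

lemma bal_rep_false (m : ℕ) : bal (List.replicate m false) = (m : ℤ) := by
  simp [bal, List.count_replicate]

/-- If x' = 1^k x 0^k has a substring of balance −(k+1) starting at position i < k, then some
prefix of x has negative balance. -/
theorem minus_substring_in_head (x : List Bool) (n k : ℕ) (hn : x.length = n)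
    (i j : ℕ) (hij : i ≤ j) (hj : j < n + 2 * k) (hik : i < k)
    (hbal : bal (sub (List.replicate k true ++ x ++ List.replicate k false) i j)
      = -((k : ℤ) + 1)) :
    ∃ p, p <+: x ∧ bal p < 0 := by
  by_contra h
  push_neg at h
  set m := j + 1 - i with hm
  have hd : (List.replicate k true ++ x ++ List.replicate k false).drop i
      = List.replicate (k - i) true ++ (x ++ List.replicate k false) := by
    rw [List.append_assoc, List.drop_append_of_le_length (by simp; omega),
      List.drop_replicate]
  have hsub : sub (List.replicate k true ++ x ++ List.replicate k false) i j
      = List.replicate (min m (k - i)) true ++ (List.take (m - (k - i)) x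
        ++ List.replicate (min (m - (k - i) - x.length) k) false) := by
    rw [sub, hd, List.take_append, List.take_replicate,
      List.take_append, List.take_replicate, List.length_replicate]
  rw [hsub, bal_append, bal_append, bal_rep_true, bal_rep_false] at hbal
  have h1 : 0 ≤ bal (List.take (m - (k - i)) x) := h _ (List.take_prefix _ _)
  have h2 : ((min m (k - i) : ℕ) : ℤ) ≤ (k : ℤ) := by
    have : min m (k - i) ≤ k := le_trans (min_le_right _ _) (Nat.sub_le _ _)
    exact_mod_cast this
  have h3 : (0 : ℤ) ≤ ((min (m - (k - i) - x.length) k : ℕ) : ℤ) := Int.natCast_nonneg _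
  linarith
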